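/- Let K be a finite field of characteristic p, f(X) = X^p − X + ξ ∈ K[X] irreducible over K, and γ a root of f in an extension field. For a, b, d ∈ K with d ≠ 0: if p ≥ 3 then Tr_{K(γ)/K}((aγ + b)/d) = 0, and if p = 2 then Tr_{K(γ)/K}((aγ + b)/d) = a/d. -/

import Mathlib

open Polynomial IntermediateField

/-- Let `K` be a finite field of characteristic `p`,
`f(X) = X^p - X + ξ ∈ K[X]` irreducible, `γ` a root of `f` in an extension `L = K(γ)`.
For `a, b, d ∈ K` with `d ≠ 0`: if `p ≥ 3` then `Tr_{K(γ)/K}((aγ+b)/d) = 0`, and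
if `p = 2` then `Tr_{K(γ)/K}((aγ+b)/d) = a/d`. -/
theorem trace_linear_div_const (p : ℕ) [Fact p.Prime] (K L : Type*) [Field K] [Finite K]
    [CharP K p] [Field L] [Algebra K L] [FiniteDimensional K L] (ξ : K)
    (hirr : Irreducible (X ^ p - X + C ξ)) (γ : L)
    (hroot : γ ^ p - γ + algebraMap K L ξ = 0)
    (hgen : IntermediateField.adjoin K {γ} = ⊤)
    (a b d : K) (hd : d ≠ 0) :
    (3 ≤ p →
      Algebra.trace K L ((algebraMap K L a * γ + algebraMap K L b) / algebraMap K L d) = 0) ∧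
    (p = 2 →
      Algebra.trace K L ((algebraMap K L a * γ + algebraMap K L b) / algebraMap K L d) = a / d) := by
  have hp2 : 2 ≤ p := (Fact.out : p.Prime).two_le
  have hmonic : (X ^ p - X + C ξ : K[X]).Monic := by
    have h : (X ^ p - X + C ξ : K[X]) = X ^ p + (-X + C ξ) := by ring
    rw [h]
    apply monic_X_pow_add
    refine lt_of_le_of_lt (degree_add_le _ _) ?_
    rw [degree_neg, degree_X]
    have : degree (C ξ : K[X]) ≤ 1 := le_trans degree_C_le (by norm_num)
    have h1 : (1 : WithBot ℕ) < p := by exact_mod_cast (by omega : 1 < p)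
    exact lt_of_le_of_lt (max_le le_rfl this) h1
  have haev : aeval γ (X ^ p - X + C ξ : K[X]) = 0 := by
    simp only [map_add, map_sub, map_pow, aeval_X, aeval_C]
    exact hroot
  have hmin : minpoly K γ = X ^ p - X + C ξ :=
    (minpoly.eq_of_irreducible_of_monic hirr haev hmonic).symm
  have hdeg : (X ^ p - X + C ξ : K[X]).natDegree = p := by
    have h : (X ^ p - X + C ξ : K[X]) = X ^ p + (-X + C ξ) := by ring
    rw [h]
    have hlt : degree (-X + C ξ : K[X]) < degree (X ^ p : K[X]) := by
      rw [degree_X_pow]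
      refine lt_of_le_of_lt (degree_add_le _ _) ?_
      rw [degree_neg, degree_X]
      have : degree (C ξ : K[X]) ≤ 1 := le_trans degree_C_le (by norm_num)
      have h1 : (1 : WithBot ℕ) < p := by exact_mod_cast (by omega : 1 < p)
      exact lt_of_le_of_lt (max_le le_rfl this) h1
    have hdeg' : (X ^ p + (-X + C ξ) : K[X]).degree = p := by
      rw [degree_add_eq_left_of_degree_lt hlt, degree_X_pow]
    exact natDegree_eq_of_degree_eq_some hdeg'
  -- power basis of L with generator γ
  have hint : IsIntegral K γ := Algebra.IsIntegral.isIntegral γ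
  let e : K⟮γ⟯ ≃ₐ[K] L :=
    (IntermediateField.equivOfEq hgen).trans IntermediateField.topEquiv
  let pb : PowerBasis K L := (IntermediateField.adjoin.powerBasis hint).map e
  have hgen' : pb.gen = γ := rfl
  have hdim : pb.dim = p := by
    rw [← pb.natDegree_minpoly, hgen', hmin, hdeg]
  have hfin : Module.finrank K L = p := by rw [pb.finrank, hdim]
  have htr1 : ∀ c : K, Algebra.trace K L (algebraMap K L c) = 0 := by
    intro c
    rw [Algebra.trace_algebraMap, hfin, nsmul_eq_mul, CharP.cast_eq_zero, zero_mul]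
  have htrγ : Algebra.trace K L γ = -(X ^ p - X + C ξ : K[X]).nextCoeff := by
    have := pb.trace_gen_eq_nextCoeff_minpoly
    rw [hgen', hmin] at this
    exact this
  have hnext : (X ^ p - X + C ξ : K[X]).nextCoeff = (X ^ p - X + C ξ : K[X]).coeff (p - 1) := by
    rw [nextCoeff_of_natDegree_pos (by rw [hdeg]; omega), hdeg]
  have key : ∀ x : L, (algebraMap K L a * γ + algebraMap K L b) / algebraMap K L d
      = algebraMap K L (a / d) * γ + algebraMap K L (b / d) := by
    intro _
    field_simp
    rw [map_div₀, map_div₀]; ring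
  rw [show (algebraMap K L a * γ + algebraMap K L b) / algebraMap K L d
      = algebraMap K L (a / d) * γ + algebraMap K L (b / d) from key γ]
  have hsmul : ∀ c : K, algebraMap K L c * γ = c • γ := fun c => (Algebra.smul_def c γ).symm
  rw [map_add, hsmul, map_smul, htr1, htrγ, hnext]
  constructor
  · intro hp3
    have hc : (X ^ p - X + C ξ : K[X]).coeff (p - 1) = 0 := by
      simp only [coeff_add, coeff_sub, coeff_X_pow, coeff_X, coeff_C]
      rw [if_neg (by omega), if_neg (by omega), if_neg (by omega)]
      ring
    simp [hc]
  · intro hp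
    subst hp
    have hc : (X ^ 2 - X + C ξ : K[X]).coeff 1 = -1 := by
      simp [coeff_X_pow, coeff_C]
    simp only [hc]
    simp [smul_eq_mul]
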